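/- For fixed μ ∈ (0,1], the function f₋(μ,λ) = μ²/4 + (−1 − √(1 − 8μ²λ))/(8λ) is strictly monotonically increasing in λ on (−1/μ², 0) and satisfies f₋(μ,λ) > 3μ²/4 for all λ in that interval. -/

import Mathlib

open Real Set

theorem stmt_5 (μ : ℝ) (hμ0 : 0 < μ) (hμ1 : μ ≤ 1) :
    StrictMonoOn (fun l : ℝ => μ ^ 2 / 4 + (-1 - Real.sqrt (1 - 8 * μ ^ 2 * l)) / (8 * l))
      (Set.Ioo (-1 / μ ^ 2) 0) ∧
    ∀ l ∈ Set.Ioo (-1 / μ ^ 2) (0 : ℝ),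
      3 * μ ^ 2 / 4 < μ ^ 2 / 4 + (-1 - Real.sqrt (1 - 8 * μ ^ 2 * l)) / (8 * l) := by
  have hμ2 : 0 < μ ^ 2 := by positivity
  have hs1 : ∀ l : ℝ, l < 0 → 1 < Real.sqrt (1 - 8 * μ ^ 2 * l) := by
    intro l hl
    have h1 : 1 < 1 - 8 * μ ^ 2 * l := by nlinarith
    calc (1:ℝ) = Real.sqrt 1 := by simp
    _ < _ := Real.sqrt_lt_sqrt (by norm_num) h1
  have key : ∀ l : ℝ, l < 0 →
      (-1 - Real.sqrt (1 - 8 * μ ^ 2 * l)) / (8 * l)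
        = μ ^ 2 / (Real.sqrt (1 - 8 * μ ^ 2 * l) - 1) := by
    intro l hl
    have hs := hs1 l hl
    have hsq : Real.sqrt (1 - 8 * μ ^ 2 * l) ^ 2 = 1 - 8 * μ ^ 2 * l :=
      Real.sq_sqrt (by nlinarith)
    have h8 : (8:ℝ) * l ≠ 0 := by nlinarith
    have hd : Real.sqrt (1 - 8 * μ ^ 2 * l) - 1 ≠ 0 := by linarith
    have hl0 : l ≠ 0 := by linarith
    field_simp
    nlinarith [hsq]
  constructor
  · intro a ha b hb hab
    simp only
    rw [key a ha.2, key b hb.2]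
    have hsa := hs1 a ha.2
    have hsb := hs1 b hb.2
    have hlt : Real.sqrt (1 - 8 * μ ^ 2 * b) < Real.sqrt (1 - 8 * μ ^ 2 * a) := by
      apply Real.sqrt_lt_sqrt (by nlinarith [hb.2])
      nlinarith
    have := div_lt_div_of_pos_left hμ2 (by linarith : (0:ℝ) < Real.sqrt (1 - 8 * μ ^ 2 * b) - 1)
      (by linarith : Real.sqrt (1 - 8 * μ ^ 2 * b) - 1 < Real.sqrt (1 - 8 * μ ^ 2 * a) - 1)
    linarith
  · intro l hl
    rw [key l hl.2]
    have hs := hs1 l hl.2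
    have hlt3 : Real.sqrt (1 - 8 * μ ^ 2 * l) < 3 := by
      rw [show (3:ℝ) = Real.sqrt 9 by rw [show (9:ℝ) = 3 ^ 2 by norm_num, Real.sqrt_sq]; norm_num]
      apply Real.sqrt_lt_sqrt (by nlinarith [hl.2])
      have h := (div_lt_iff₀ hμ2).mp hl.1
      nlinarith
    have := div_lt_div_of_pos_left hμ2 (by linarith : (0:ℝ) < Real.sqrt (1 - 8 * μ ^ 2 * l) - 1)
      (by linarith : Real.sqrt (1 - 8 * μ ^ 2 * l) - 1 < 2)
    linarith
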